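/- The divided difference operators on ℤ[x₁,...,x_m] satisfy the braid relation ∂_a ∂_{a+1} ∂_a = ∂_{a+1} ∂_a ∂_{a+1} for 1 ≤ a ≤ m-2. -/

import Mathlib

open MvPolynomial

/-- the divided difference operators on ℤ[x₁,...,x_m] satisfy the braid
relation ∂_a ∂_{a+1} ∂_a = ∂_{a+1} ∂_a ∂_{a+1}.  Here `D1` is the divided difference
at the pair (x_a, x_{a+1}) and `D2` the one at (x_{a+1}, x_{a+2}), each characterized
uniquely by the divisibility property `(x_a - x_{a+1}) * ∂_a f = f - s_a f`. -/
theorem divided_difference_braid (m a : ℕ) (ha : a + 2 < m)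
    (D1 D2 : MvPolynomial (Fin m) ℤ →ₗ[ℤ] MvPolynomial (Fin m) ℤ)
    (hD1 : ∀ f, (X (⟨a, by omega⟩ : Fin m) - X ⟨a + 1, by omega⟩) * D1 f
      = f - rename (Equiv.swap (⟨a, by omega⟩ : Fin m) ⟨a + 1, by omega⟩) f)
    (hD2 : ∀ f, (X (⟨a + 1, by omega⟩ : Fin m) - X ⟨a + 2, ha⟩) * D2 f
      = f - rename (Equiv.swap (⟨a + 1, by omega⟩ : Fin m) ⟨a + 2, ha⟩) f) :
    ∀ f, D1 (D2 (D1 f)) = D2 (D1 (D2 f)) := by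
  intro f
  have hi : a < m := by omega
  have hj : a + 1 < m := by omega
  set i : Fin m := ⟨a, hi⟩ with hidef
  set j : Fin m := ⟨a + 1, hj⟩ with hjdef
  set k : Fin m := ⟨a + 2, ha⟩ with hkdef
  have hij : i ≠ j := by simp [hidef, hjdef, Fin.ext_iff]
  have hjk : j ≠ k := by simp [hjdef, hkdef, Fin.ext_iff]
  have hik : i ≠ k := by simp [hidef, hkdef, Fin.ext_iff]
  set s : Equiv.Perm (Fin m) := Equiv.swap i j with hsdef
  set t : Equiv.Perm (Fin m) := Equiv.swap j k with htdef
  have hD1' : ∀ g, (X i - X j) * D1 g = g - rename s g := hD1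
  have hD2' : ∀ g, (X j - X k) * D2 g = g - rename t g := hD2
  set P1 : MvPolynomial (Fin m) ℤ := X i - X j with hP1def
  set P2 : MvPolynomial (Fin m) ℤ := X j - X k with hP2def
  set P3 : MvPolynomial (Fin m) ℤ := X i - X k with hP3def
  -- swap application facts
  have hsi : s i = j := Equiv.swap_apply_left i j
  have hsj : s j = i := Equiv.swap_apply_right i j
  have hsk : s k = k := Equiv.swap_apply_of_ne_of_ne (Ne.symm hik) (Ne.symm hjk)
  have hti : t i = i := Equiv.swap_apply_of_ne_of_ne hij hik
  have htj : t j = k := Equiv.swap_apply_left j k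
  have htk : t k = j := Equiv.swap_apply_right j k
  -- renamed versions of the defining identities
  have key_s : ∀ g, P3 * rename s (D2 g)
      = rename s g - rename s (rename t g) := by
    intro g
    have h := congrArg (rename (⇑s)) (hD2' g)
    simp only [map_mul, map_sub, rename_X, hP2def, hsj, hsk] at h
    rw [hP3def]
    exact h
  have key_t : ∀ g, P3 * rename t (D1 g)
      = rename t g - rename t (rename s g) := by
    intro g
    have h := congrArg (rename (⇑t)) (hD1' g)
    simp only [map_mul, map_sub, rename_X, hP1def, hti, htj] at h
    rw [hP3def]
    exact h
  have hss : ∀ g : MvPolynomial (Fin m) ℤ, rename (⇑s) (rename (⇑s) g) = g := by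
    intro g
    rw [rename_rename]
    have hc : (⇑s ∘ ⇑s) = id := by
      funext x; exact Equiv.swap_apply_self i j x
    rw [hc, rename_id, AlgHom.id_apply]
  have htt : ∀ g : MvPolynomial (Fin m) ℤ, rename (⇑t) (rename (⇑t) g) = g := by
    intro g
    rw [rename_rename]
    have hc : (⇑t ∘ ⇑t) = id := by
      funext x; exact Equiv.swap_apply_self j k x
    rw [hc, rename_id, AlgHom.id_apply]
  have key_ss : ∀ g, P1 * rename s (D1 g) = g - rename s g := by
    intro g
    have h := congrArg (rename (⇑s)) (hD1' g)
    simp only [map_mul, map_sub, rename_X, hP1def, hsi, hsj, hss] at h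
    rw [hP1def]
    linear_combination -h
  have key_tt : ∀ g, P2 * rename t (D2 g) = g - rename t g := by
    intro g
    have h := congrArg (rename (⇑t)) (hD2' g)
    simp only [map_mul, map_sub, rename_X, hP2def, htj, htk, htt] at h
    rw [hP2def]
    linear_combination -h
  have key_st : ∀ g, P2 * rename s (rename t (D1 g))
      = rename s (rename t g) - rename s (rename t (rename s g)) := by
    intro g
    have h := congrArg (rename (⇑s)) (key_t g)
    simp only [map_mul, map_sub, rename_X, hP3def, hsi, hsk] at h
    rw [hP2def]
    exact h
  have key_ts : ∀ g, P1 * rename t (rename s (D2 g))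
      = rename t (rename s g) - rename t (rename s (rename t g)) := by
    intro g
    have h := congrArg (rename (⇑t)) (key_s g)
    simp only [map_mul, map_sub, rename_X, hP3def, hti, htk] at h
    rw [hP1def]
    exact h
  -- braid relation for the swaps
  have hb : rename s (rename t (rename s f)) = rename t (rename s (rename t f)) := by
    rw [rename_rename, rename_rename, rename_rename, rename_rename]
    have hfun : ((⇑s ∘ ⇑t) ∘ ⇑s) = ((⇑t ∘ ⇑s) ∘ ⇑t) := by
      funext x
      simp only [Function.comp_apply]
      rcases eq_or_ne x i with rfl | hxi
      · simp only [hsi, htj, hsk, hti]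
      rcases eq_or_ne x j with rfl | hxj
      · simp only [hsj, hti, hsi, htj, hsk, htk]
      rcases eq_or_ne x k with rfl | hxk
      · simp only [hsk, htk, hsj, hti]
      · have h1 : s x = x := Equiv.swap_apply_of_ne_of_ne hxi hxj
        have h2 : t x = x := Equiv.swap_apply_of_ne_of_ne hxj hxk
        simp only [h1, h2]
    rw [hfun]
  -- nonvanishing
  have hX : Function.Injective (X : Fin m → MvPolynomial (Fin m) ℤ) := X_injective
  have hP1ne : P1 ≠ 0 := sub_ne_zero_of_ne (fun h => hij (hX h))
  have hP2ne : P2 ≠ 0 := sub_ne_zero_of_ne (fun h => hjk (hX h))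
  have hP3ne : P3 ≠ 0 := sub_ne_zero_of_ne (fun h => hik (hX h))
  have hPne : P1 ^ 2 * P2 ^ 2 * P3 ≠ 0 :=
    mul_ne_zero (mul_ne_zero (pow_ne_zero _ hP1ne) (pow_ne_zero _ hP2ne)) hP3ne
  apply mul_left_cancel₀ hPne
  -- named instances of the identities
  have h1 := hD1' f
  have h7 := key_ss f
  have h3 := hD2' (D1 f)
  have hG := hD1' (D2 (D1 f))
  have h4 := key_s (D1 f)
  have h5 := key_t f
  have h6 := key_st f
  have k1 := hD2' f
  have k7 := key_tt f
  have k3 := hD1' (D2 f)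
  have kG := hD2' (D1 (D2 f))
  have k4 := key_t (D2 f)
  have k5 := key_s f
  have k6 := key_ts f
  have hP : P3 = P1 + P2 := by rw [hP1def, hP2def, hP3def]; ring
  linear_combination (P1*P2^2*P3) * hG + (P1*P2*P3) * h3 - (P1*P2^2) * h4
    + (P2*P3) * h1 - (P1*P2) * h5 - (P2^2) * h7 + (P1*P2) * h6
    - (P1^2*P2*P3) * kG - (P1*P2*P3) * k3 + (P1^2*P2) * k4 - (P1*P3) * k1
    + (P1*P2) * k5 + (P1^2) * k7 - (P1*P2) * k6 - (P1*P2) * hb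
    + (P1^2*P2^2 * (D1 (D2 (D1 f))) - P1^2*P2^2 * (D2 (D1 (D2 f)))) * hP
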